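/- Let X and Y be disjoint Hausdorff spaces with Y locally compact, p : X → Y × [0, +∞) a continuous proper map, and f the composition of p with the projection to Y. Then the identity map from the teardrop X ∪_p Y to Whyburn's unified space X ⊕ Y is continuous; combined with the converse direction, the identity from X ⊕ Y to X ∪_p Y is a homeomorphism if and only if p is proper. -/

import Mathlib

open Topology Set

/-- The collapse map of the teardrop `X ∪_p Y` (modelled in `Y × EReal`). -/
noncomputable def teardropCollapse {X Y : Type*} (p : X → Y × ℝ) : X ⊕ Y → Y × EReal
  | Sum.inl x => ((p x).1, ((p x).2 : EReal))
  | Sum.inr y => (y, ⊤)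

/-- The teardrop topology on `X ⊔ Y`. -/
def teardropTop {X Y : Type*} [TopologicalSpace X] [TopologicalSpace Y]
    (p : X → Y × ℝ) : TopologicalSpace (X ⊕ Y) :=
  TopologicalSpace.generateFrom
    ({S | ∃ U : Set X, IsOpen U ∧ S = Sum.inl '' U} ∪
     {S | ∃ V : Set (Y × EReal), IsOpen V ∧ S = teardropCollapse p ⁻¹' V})

/-- Whyburn's openness condition for the unified space `X ⊕ Y` attached to
`f : X → Y`: `V` is open iff `V ∩ X` and `V ∩ Y` are open and for every
compact `K ⊆ V ∩ Y`, the set `f⁻¹(K) ∩ (X \ V)` is compact. -/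
def WhyburnOpen {X Y : Type*} [TopologicalSpace X] [TopologicalSpace Y]
    (f : X → Y) (V : Set (X ⊕ Y)) : Prop :=
  IsOpen (Sum.inl ⁻¹' V) ∧ IsOpen (Sum.inr ⁻¹' V) ∧
    ∀ K : Set Y, K ⊆ Sum.inr ⁻¹' V → IsCompact K →
      IsCompact (f ⁻¹' K ∩ (Sum.inl ⁻¹' V)ᶜ)

section Aux

variable {X Y : Type*} [TopologicalSpace X] [TopologicalSpace Y]

lemma teardrop_continuous_inl (p : X → Y × ℝ) (hp : Continuous p) :
    Continuous fun x : X => ((p x).1, ((p x).2 : EReal)) :=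
  (continuous_fst.comp hp).prodMk (continuous_coe_real_ereal.comp (continuous_snd.comp hp))

omit [TopologicalSpace X] [TopologicalSpace Y] in
lemma teardrop_inl_preimage (p : X → Y × ℝ) (V : Set (Y × EReal)) :
    Sum.inl ⁻¹' (teardropCollapse p ⁻¹' V)
      = (fun x : X => ((p x).1, ((p x).2 : EReal))) ⁻¹' V := rfl

omit [TopologicalSpace X] [TopologicalSpace Y] in
lemma teardrop_inr_preimage (p : X → Y × ℝ) (V : Set (Y × EReal)) :
    Sum.inr ⁻¹' (teardropCollapse p ⁻¹' V)
      = (fun y : Y => (y, (⊤ : EReal))) ⁻¹' V := rfl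

/-- Whyburn-open implies teardrop-open (needs no properness). -/
lemma whyburn_to_teardrop [T2Space Y] [LocallyCompactSpace Y]
    (p : X → Y × ℝ) (hp : Continuous p)
    (W : Set (X ⊕ Y)) (hW : WhyburnOpen (fun x => (p x).1) W) :
    IsOpen[teardropTop p] W := by
  letI := teardropTop p
  obtain ⟨h1, h2, h3⟩ := hW
  have hgen1 : ∀ U : Set X, IsOpen U → IsOpen (Sum.inl '' U : Set (X ⊕ Y)) := fun U hU =>
    TopologicalSpace.GenerateOpen.basic _ (Or.inl ⟨U, hU, rfl⟩)
  have hgen2 : ∀ V : Set (Y × EReal), IsOpen V → IsOpen (teardropCollapse p ⁻¹' V) := fun V hV =>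
    TopologicalSpace.GenerateOpen.basic _ (Or.inr ⟨V, hV, rfl⟩)
  rw [isOpen_iff_forall_mem_open]
  rintro (x | y) hxy
  · refine ⟨Sum.inl '' (Sum.inl ⁻¹' W), ?_, hgen1 _ h1, ⟨x, hxy, rfl⟩⟩
    rintro a ⟨x', hx', rfl⟩
    exact hx'
  · -- find a compact neighborhood of y inside inr⁻¹ W
    obtain ⟨K, hK, hyK, hKV⟩ := exists_compact_subset h2 hxy
    have hC : IsCompact ((fun x => (p x).1) ⁻¹' K ∩ (Sum.inl ⁻¹' W)ᶜ) :=
      h3 K hKV hK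
    obtain ⟨M, hM⟩ := (hC.image (continuous_snd.comp hp)).bddAbove
    refine ⟨teardropCollapse p ⁻¹' (interior K ×ˢ Ioi (M : EReal)), ?_, ?_, ?_⟩
    · rintro (x | y') hx
      · -- inl case
        simp only [teardropCollapse, mem_preimage, mem_prod, mem_Ioi] at hx
        by_contra hxW
        have hxC : x ∈ (fun x => (p x).1) ⁻¹' K ∩ (Sum.inl ⁻¹' W)ᶜ :=
          ⟨(interior_subset : interior K ⊆ K) hx.1, hxW⟩
        have : (p x).2 ≤ M := hM ⟨x, hxC, rfl⟩
        exact absurd hx.2 (not_lt.2 (by exact_mod_cast this))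
      · simp only [teardropCollapse, mem_preimage, mem_prod] at hx
        exact hKV (interior_subset hx.1)
    · exact hgen2 _ ((isOpen_interior).prod isOpen_Ioi)
    · simp only [teardropCollapse, mem_preimage, mem_prod, mem_Ioi]
      exact ⟨hyK, EReal.coe_lt_top M⟩

/-- Teardrop-open implies Whyburn-open, given `p` proper. -/
lemma teardrop_to_whyburn [T2Space X] [T2Space Y] [LocallyCompactSpace Y]
    (p : X → Y × ℝ) (hp : Continuous p) (hnonneg : ∀ x, 0 ≤ (p x).2)
    (hproper : ∀ K : Set (Y × ℝ), IsCompact K → IsCompact (p ⁻¹' K))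
    (W : Set (X ⊕ Y)) (hW : IsOpen[teardropTop p] W) :
    WhyburnOpen (fun x => (p x).1) W := by
  induction hW with
  | basic S hS =>
    rcases hS with ⟨U, hU, rfl⟩ | ⟨V, hV, rfl⟩
    · refine ⟨by rwa [Set.preimage_image_eq _ Sum.inl_injective], ?_, ?_⟩
      · have : Sum.inr ⁻¹' (Sum.inl '' U : Set (X ⊕ Y)) = ∅ := by
          ext y; simp
        rw [this]; exact isOpen_empty
      · intro K hK _
        have : Sum.inr ⁻¹' (Sum.inl '' U : Set (X ⊕ Y)) = ∅ := by
          ext y; simp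
        rw [this] at hK
        have : K = ∅ := subset_empty_iff.mp hK
        simp [this, isCompact_empty]
    · have hopenl : IsOpen (Sum.inl ⁻¹' (teardropCollapse p ⁻¹' V)) := by
        rw [teardrop_inl_preimage]
        exact hV.preimage (teardrop_continuous_inl p hp)
      refine ⟨hopenl, ?_, ?_⟩
      · rw [teardrop_inr_preimage]
        exact hV.preimage (continuous_id.prodMk continuous_const)
      · intro K hK hKc
        -- tube lemma at ⊤
        have htube : ∀ y ∈ K, ∃ O : Set Y, ∃ r : ℝ, IsOpen O ∧ y ∈ O ∧
            O ×ˢ Ioi (r : EReal) ⊆ V := by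
          intro y hy
          have hyV : (y, (⊤ : EReal)) ∈ V := hK hy
          rcases isOpen_prod_iff.mp hV y ⊤ hyV with ⟨O, T, hO, hT, hyO, hTt, hsub⟩
          rcases EReal.mem_nhds_top_iff.mp (hT.mem_nhds hTt) with ⟨r, hr⟩
          exact ⟨O, r, hO, hyO, fun z hz => hsub ⟨hz.1, hr hz.2⟩⟩
        choose! O r hO hyO hsub using htube
        obtain ⟨t, ht⟩ := hKc.elim_finite_subcover_image (fun y hy => hO y hy)
          (fun y hy => mem_biUnion hy (hyO y hy))
        obtain ⟨htK, htfin, htcov⟩ := ht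
        obtain ⟨M, hM⟩ := (htfin.image r).bddAbove
        -- the set is a closed subset of p⁻¹(K × [0, M])
        have hclosed : IsClosed ((fun x => (p x).1) ⁻¹' K ∩
            (Sum.inl ⁻¹' (teardropCollapse p ⁻¹' V))ᶜ) :=
          (hKc.isClosed.preimage (continuous_fst.comp hp)).inter hopenl.isClosed_compl
        refine (hproper (K ×ˢ Icc 0 M) (hKc.prod isCompact_Icc)).of_isClosed_subset
          hclosed ?_
        rintro x ⟨hx1, hx2⟩
        refine ⟨hx1, hnonneg x, ?_⟩
        by_contra hgt
        push_neg at hgt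
        obtain ⟨y, hyt, hxy⟩ := mem_iUnion₂.mp (htcov hx1)
        have hry : r y ≤ M := hM ⟨y, hyt, rfl⟩
        have : ((p x).1, ((p x).2 : EReal)) ∈ V := by
          refine hsub y (htK hyt) ⟨hxy, ?_⟩
          simp only [mem_Ioi]
          exact_mod_cast lt_of_le_of_lt hry hgt
        exact hx2 this
  | univ =>
    exact ⟨isOpen_univ, isOpen_univ, fun K _ _ => by simp [isCompact_empty]⟩
  | inter s t _ _ ihs iht =>
    obtain ⟨hs1, hs2, hs3⟩ := ihs
    obtain ⟨ht1, ht2, ht3⟩ := iht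
    refine ⟨hs1.inter ht1, hs2.inter ht2, ?_⟩
    intro K hK hKc
    have hKs : K ⊆ Sum.inr ⁻¹' s := fun y hy => (hK hy).1
    have hKt : K ⊆ Sum.inr ⁻¹' t := fun y hy => (hK hy).2
    have : (fun x => (p x).1) ⁻¹' K ∩ (Sum.inl ⁻¹' (s ∩ t))ᶜ =
        ((fun x => (p x).1) ⁻¹' K ∩ (Sum.inl ⁻¹' s)ᶜ) ∪
        ((fun x => (p x).1) ⁻¹' K ∩ (Sum.inl ⁻¹' t)ᶜ) := by
      rw [Set.preimage_inter, Set.compl_inter, Set.inter_union_distrib_left]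
    rw [this]
    exact (hs3 K hKs hKc).union (ht3 K hKt hKc)
  | sUnion S _ ih =>
    have h1 : IsOpen (Sum.inl ⁻¹' ⋃₀ S) := by
      rw [Set.preimage_sUnion]
      exact isOpen_biUnion fun s hs => (ih s hs).1
    refine ⟨h1, ?_, ?_⟩
    · rw [Set.preimage_sUnion]
      exact isOpen_biUnion fun s hs => (ih s hs).2.1
    · intro K hK hKc
      classical
      have hcov : K ⊆ ⋃ s : S, Sum.inr ⁻¹' (s : Set (X ⊕ Y)) := by
        intro y hy
        obtain ⟨s, hs, hys⟩ := hK hy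
        exact mem_iUnion.2 ⟨⟨s, hs⟩, hys⟩
      obtain ⟨t, htcov⟩ := hKc.elim_finite_subcover
        (fun s : S => Sum.inr ⁻¹' (s : Set (X ⊕ Y)))
        (fun s => (ih s s.2).2.1) hcov
      obtain ⟨C, hCc, hCsub, hCeq⟩ := hKc.finite_compact_cover t
        (fun s : S => Sum.inr ⁻¹' (s : Set (X ⊕ Y)))
        (fun s _ => (ih s s.2).2.1) htcov
      have hsplit : (fun x => (p x).1) ⁻¹' K ∩ (Sum.inl ⁻¹' ⋃₀ S)ᶜ =
          ⋃ s ∈ t, ((fun x : X => (p x).1) ⁻¹' C s ∩ (Sum.inl ⁻¹' ⋃₀ S)ᶜ) := by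
        rw [hCeq]
        ext x
        simp only [mem_inter_iff, mem_preimage, mem_iUnion, exists_prop]
        tauto
      rw [hsplit]
      refine t.finite_toSet.isCompact_biUnion fun s hs => ?_
      have hcs : IsCompact ((fun x : X => (p x).1) ⁻¹' C s ∩
          (Sum.inl ⁻¹' (s : Set (X ⊕ Y)))ᶜ) :=
        (ih s s.2).2.2 (C s) (hCsub s) (hCc s)
      refine hcs.of_isClosed_subset
        (((hCc s).isClosed.preimage (continuous_fst.comp hp)).inter h1.isClosed_compl) ?_
      refine inter_subset_inter_right _ (compl_subset_compl.2 ?_)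
      exact preimage_mono fun a ha => ⟨s, s.2, ha⟩

end Aux

theorem teardrop_to_unified_continuous_and_homeo_iff_proper
    {X Y : Type*} [TopologicalSpace X] [TopologicalSpace Y]
    [T2Space X] [T2Space Y] [LocallyCompactSpace Y]
    (p : X → Y × ℝ) (hp : Continuous p) (hnonneg : ∀ x, 0 ≤ (p x).2) :
    ((∀ K : Set (Y × ℝ), IsCompact K → IsCompact (p ⁻¹' K)) →
        ∀ W : Set (X ⊕ Y), WhyburnOpen (fun x => (p x).1) W →
          IsOpen[teardropTop p] W) ∧
      ((∀ W : Set (X ⊕ Y), WhyburnOpen (fun x => (p x).1) W ↔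
          IsOpen[teardropTop p] W) ↔
        ∀ K : Set (Y × ℝ), IsCompact K → IsCompact (p ⁻¹' K)) := by
  refine ⟨fun _ W hW => whyburn_to_teardrop p hp W hW, ?_, ?_⟩
  · -- homeo → proper
    intro hiff K hK
    obtain ⟨b, hb⟩ := (hK.image continuous_snd).bddAbove
    set V : Set (Y × EReal) := univ ×ˢ Ioi (b : EReal) with hV
    have hVopen : IsOpen V := isOpen_univ.prod isOpen_Ioi
    have hWopen : IsOpen[teardropTop p] (teardropCollapse p ⁻¹' V) :=
      TopologicalSpace.GenerateOpen.basic _ (Or.inr ⟨V, hVopen, rfl⟩)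
    have hWhy : WhyburnOpen (fun x => (p x).1) (teardropCollapse p ⁻¹' V) :=
      (hiff _).mpr hWopen
    have hK1 : IsCompact (Prod.fst '' K) := hK.image continuous_fst
    have hC := hWhy.2.2 (Prod.fst '' K)
      (fun y _ => by
        simp only [teardrop_inr_preimage, mem_preimage, hV, mem_prod, mem_univ, true_and,
          mem_Ioi]
        exact EReal.coe_lt_top b) hK1
    refine hC.of_isClosed_subset (hK.isClosed.preimage hp) ?_
    intro x hx
    refine ⟨⟨p x, hx, rfl⟩, ?_⟩
    simp only [mem_compl_iff, mem_preimage, teardropCollapse, hV, mem_prod, mem_univ,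
      true_and, mem_Ioi, not_lt]
    exact_mod_cast hb ⟨p x, hx, rfl⟩
  · -- proper → homeo
    intro hproper W
    exact ⟨whyburn_to_teardrop p hp W, teardrop_to_whyburn p hp hnonneg hproper W⟩
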